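/- For every p ∈ (0,1), the series ∑_{t=1}^∞ ((t+1)^p − t^p)² / t^(2p) converges and its sum is at most 2. -/

import Mathlib

open Real

lemma key (p : ℝ) (hp0 : 0 < p) (hp1 : p < 1) (t : ℕ) :
    ((((t : ℝ) + 1) + 1) ^ p - ((t : ℝ) + 1) ^ p)^2 / ((t : ℝ) + 1) ^ (2 * p)
      ≤ 1 / ((t : ℝ) + 1) ^ 2 := by
  set x : ℝ := (t : ℝ) + 1 with hxdef
  have hx1 : (1 : ℝ) ≤ x := by
    simp [hxdef]
  have hx0 : (0 : ℝ) < x := lt_of_lt_of_le one_pos hx1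
  have hdiff0 : 0 ≤ (x + 1) ^ p - x ^ p := by
    have := Real.rpow_le_rpow hx0.le (by linarith : x ≤ x + 1) hp0.le
    linarith
  -- Bernoulli: (1 + 1/x)^p ≤ 1 + p/x
  have hbern : (1 + 1/x) ^ p ≤ 1 + p * (1/x) :=
    rpow_one_add_le_one_add_mul_self (by
      have : (0:ℝ) ≤ 1/x := by positivity
      linarith) hp0.le hp1.le
  have hdiff : (x + 1) ^ p - x ^ p ≤ p * x ^ p / x := by
    have hxp : (0:ℝ) < x ^ p := Real.rpow_pos_of_pos hx0 p
    have h1 : (x + 1) ^ p = x ^ p * (1 + 1/x) ^ p := by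
      rw [← Real.mul_rpow hx0.le (by positivity : (0:ℝ) ≤ 1 + 1/x)]
      congr 1
      field_simp
    have h2 : x ^ p * (1 + 1/x) ^ p ≤ x ^ p * (1 + p * (1/x)) :=
      mul_le_mul_of_nonneg_left hbern hxp.le
    rw [h1]
    have : x ^ p * (1 + p * (1/x)) = x ^ p + p * x ^ p / x := by
      field_simp
    linarith [h2, this ▸ h2]
  have hsq : ((x + 1) ^ p - x ^ p)^2 ≤ (x ^ p)^2 / x^2 := by
    have hb : (x + 1) ^ p - x ^ p ≤ x ^ p / x := by
      have : p * x ^ p / x ≤ x ^ p / x := by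
        rw [div_le_div_iff₀ hx0 hx0]
        nlinarith [mul_pos (Real.rpow_pos_of_pos hx0 p) hx0]
      linarith
    calc ((x + 1) ^ p - x ^ p)^2 ≤ (x ^ p / x)^2 := by nlinarith
      _ = (x ^ p)^2 / x^2 := by rw [div_pow]
  have hx2p : x ^ (2 * p) = (x ^ p)^2 := by
    rw [two_mul, Real.rpow_add hx0, sq]
  rw [hx2p, div_le_div_iff₀ (by positivity) (by positivity)]
  have hxp2 : (0:ℝ) < (x ^ p)^2 := by positivity
  calc ((x+1)^p - x^p)^2 * x^2 ≤ ((x ^ p)^2 / x^2) * x^2 := by nlinarith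
    _ = (x ^ p)^2 := by field_simp
    _ = 1 * (x ^ p)^2 := by ring

lemma partial_bound (n : ℕ) :
    ∑ t ∈ Finset.range n, 1 / ((t : ℝ) + 1) ^ 2 ≤ 2 - 2 / ((n : ℝ) + 1) := by
  induction n with
  | zero => norm_num
  | succ n ih =>
    rw [Finset.sum_range_succ]
    push_cast
    have hn : (0:ℝ) < (n:ℝ) + 1 := by positivity
    have hn2 : (0:ℝ) < (n:ℝ) + 2 := by positivity
    have key : 1 / ((n : ℝ) + 1) ^ 2 ≤ 2 / ((n:ℝ)+1) - 2 / ((n:ℝ)+2) := by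
      rw [div_sub_div _ _ (ne_of_gt hn) (ne_of_gt hn2), div_le_div_iff₀ (by positivity) (by positivity)]
      ring_nf; nlinarith
    have : ((n:ℝ) + 1 + 1) = (n:ℝ) + 2 := by ring
    rw [this]
    linarith

theorem stmt_4 (p : ℝ) (hp0 : 0 < p) (hp1 : p < 1) :
    Summable (fun t : ℕ =>
      ((((t : ℝ) + 1) + 1) ^ p - ((t : ℝ) + 1) ^ p)^2 / ((t : ℝ) + 1) ^ (2 * p)) ∧
    (∑' t : ℕ,
      ((((t : ℝ) + 1) + 1) ^ p - ((t : ℝ) + 1) ^ p)^2 / ((t : ℝ) + 1) ^ (2 * p)) ≤ 2 := by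
  have hnn : ∀ t : ℕ, 0 ≤ ((((t : ℝ) + 1) + 1) ^ p - ((t : ℝ) + 1) ^ p)^2 / ((t : ℝ) + 1) ^ (2 * p) := by
    intro t; positivity
  have hsum2 : Summable (fun t : ℕ => 1 / ((t : ℝ) + 1) ^ 2) := by
    have := Real.summable_one_div_nat_pow.mpr (le_refl 2)
    exact_mod_cast (summable_nat_add_iff 1).mpr this |>.congr (fun t => by push_cast; ring_nf)
  have hsummable : Summable (fun t : ℕ =>
      ((((t : ℝ) + 1) + 1) ^ p - ((t : ℝ) + 1) ^ p)^2 / ((t : ℝ) + 1) ^ (2 * p)) :=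
    Summable.of_nonneg_of_le hnn (key p hp0 hp1) hsum2
  refine ⟨hsummable, ?_⟩
  apply tsum_le_of_sum_range_le hnn
  intro n
  calc ∑ t ∈ Finset.range n, ((((t : ℝ) + 1) + 1) ^ p - ((t : ℝ) + 1) ^ p)^2 / ((t : ℝ) + 1) ^ (2 * p)
      ≤ ∑ t ∈ Finset.range n, 1 / ((t : ℝ) + 1) ^ 2 :=
        Finset.sum_le_sum (fun t _ => key p hp0 hp1 t)
    _ ≤ 2 - 2 / ((n : ℝ) + 1) := partial_bound n
    _ ≤ 2 := by
        have : (0:ℝ) ≤ 2 / ((n : ℝ) + 1) := by positivity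
        linarith
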